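/- Let (H, T) be a Hilbert module over the disc algebra, X : H → H²(E) a bounded operator with Xh = Σ_{n≥0} zⁿ Xₙ h, c > 0 and L ∈ B(H, E). Then there exists a bounded operator Λ : H → H²(E) satisfying X = S_E*Λ − ΛT, P_E Λ = −L, and ‖Λh‖² ≤ ‖Lh‖² + c‖h‖² for all h ∈ H, if and only if Σ_{n=1}^∞ ‖(Σ_{j=0}^{n-1} X_{n-1-j} T^j − L Tⁿ) h‖² ≤ c‖h‖² for all h ∈ H. -/

import Mathlib

open scoped ENNReal
open Metric
open scoped NNReal

noncomputable section

/-- The vector-valued Hardy space `H²(E)`, realized as the space of square-summable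
sequences of Taylor coefficients. -/
abbrev HardySpace (E : Type*) [NormedAddCommGroup E] [InnerProductSpace ℂ E] :=
  lp (fun _ : ℕ => E) 2

/-- The sup norm of a polynomial over the open unit disc. -/
noncomputable def discSupNorm (φ : Polynomial ℂ) : ℝ :=
  ⨆ z : ball (0 : ℂ) 1, ‖φ.eval (z : ℂ)‖

section Aux
variable {E : Type*} [NormedAddCommGroup E] [InnerProductSpace ℂ E] [CompleteSpace E]

lemma hardy_summable_sq (f : HardySpace E) : Summable fun n => ‖f n‖ ^ 2 := by
  have h := lp.hasSum_norm (p := 2) (by norm_num) f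
  have h2 : ((2 : ℝ≥0∞).toReal) = (2 : ℝ) := by norm_num
  rw [h2] at h
  have := h.summable
  simpa [Real.rpow_two] using this

lemma hardy_norm_sq (f : HardySpace E) : ‖f‖ ^ 2 = ∑' n, ‖f n‖ ^ 2 := by
  have h := lp.norm_rpow_eq_tsum (p := 2) (by norm_num) f
  have h2 : ((2 : ℝ≥0∞).toReal) = (2 : ℝ) := by norm_num
  rw [h2] at h
  simpa [Real.rpow_two] using h

lemma hardy_norm_sq_split (f : HardySpace E) :
    ‖f‖ ^ 2 = ‖f 0‖ ^ 2 + ∑' m, ‖f (m + 1)‖ ^ 2 := by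
  rw [hardy_norm_sq f]
  exact Summable.tsum_eq_zero_add (hardy_summable_sq f)

lemma adjoint_shift_apply (SE : HardySpace E →L[ℂ] HardySpace E)
    (hSE : ∀ (f : HardySpace E) (n : ℕ), (SE f) n = if n = 0 then 0 else f (n - 1))
    (g : HardySpace E) (n : ℕ) :
    (ContinuousLinearMap.adjoint SE g) n = g (n + 1) := by
  apply ext_inner_left ℂ
  intro e
  have h1 : SE (lp.single 2 n e) = lp.single 2 (n + 1) e := by
    apply lp.ext; funext m
    rw [hSE]
    rcases m with _ | m
    · simp [lp.single_apply]
    · simp only [Nat.succ_ne_zero, if_false, Nat.succ_sub_one]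
      rw [lp.single_apply, lp.single_apply]
      by_cases hm : m = n
      · subst hm; simp
      · rw [Pi.single_apply, Pi.single_apply, if_neg hm, if_neg (by omega)]
  calc (inner ℂ e ((ContinuousLinearMap.adjoint SE g) n) : ℂ)
      = inner ℂ (lp.single 2 n e) (ContinuousLinearMap.adjoint SE g) :=
        (lp.inner_single_left (𝕜 := ℂ) (G := fun _ : ℕ => E) n e (ContinuousLinearMap.adjoint SE g)).symm
    _ = inner ℂ (SE (lp.single 2 n e)) g := SE.adjoint_inner_right _ _
    _ = inner ℂ (lp.single 2 (n + 1) e) g := by rw [h1]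
    _ = inner ℂ e (g (n + 1)) := lp.inner_single_left (𝕜 := ℂ) (G := fun _ : ℕ => E) (n+1) e g

lemma toENN (g : ℕ → E) (a : ℝ) (hs : Summable fun m => ‖g m‖ ^ 2)
    (h : ∑' m, ‖g m‖ ^ 2 ≤ a) :
    ∑' m, (‖g m‖₊ : ℝ≥0∞) ^ 2 ≤ ENNReal.ofReal a := by
  have key : ∀ m, (‖g m‖₊ : ℝ≥0∞) ^ 2 = ENNReal.ofReal (‖g m‖ ^ 2) := fun m => by
    rw [ENNReal.ofReal_pow (norm_nonneg _), ofReal_norm, enorm_eq_nnnorm]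
  calc ∑' m, (‖g m‖₊ : ℝ≥0∞) ^ 2 = ∑' m, ENNReal.ofReal (‖g m‖ ^ 2) := by simp only [key]
    _ = ENNReal.ofReal (∑' m, ‖g m‖ ^ 2) :=
        (ENNReal.ofReal_tsum_of_nonneg (fun m => sq_nonneg _) hs).symm
    _ ≤ ENNReal.ofReal a := ENNReal.ofReal_le_ofReal h

lemma fromENN (g : ℕ → E) (a : ℝ) (ha : 0 ≤ a)
    (h : ∑' m, (‖g m‖₊ : ℝ≥0∞) ^ 2 ≤ ENNReal.ofReal a) :
    Summable (fun m => ‖g m‖ ^ 2) ∧ ∑' m, ‖g m‖ ^ 2 ≤ a := by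
  have hco : ∀ m, (‖g m‖₊ : ℝ≥0∞) ^ 2 = ((‖g m‖₊ ^ 2 : ℝ≥0) : ℝ≥0∞) := fun m => by
    push_cast; ring
  rw [show (fun m => (‖g m‖₊ : ℝ≥0∞) ^ 2) = fun m => ((‖g m‖₊ ^ 2 : ℝ≥0) : ℝ≥0∞) from
    funext hco] at h
  have hne : (∑' m, ((‖g m‖₊ ^ 2 : ℝ≥0) : ℝ≥0∞)) ≠ ⊤ :=
    (lt_of_le_of_lt h ENNReal.ofReal_lt_top).ne
  have hs : Summable (fun m => (‖g m‖₊ ^ 2 : ℝ≥0)) :=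
    ENNReal.tsum_coe_ne_top_iff_summable.1 hne
  have hcoe : ∀ m, ((‖g m‖₊ ^ 2 : ℝ≥0) : ℝ) = ‖g m‖ ^ 2 := fun m => by push_cast; ring
  have hs' : Summable (fun m => ‖g m‖ ^ 2) := by
    have := NNReal.summable_coe.2 hs
    simpa [hcoe] using this
  refine ⟨hs', ?_⟩
  rw [← ENNReal.coe_tsum hs, ENNReal.ofReal, ENNReal.coe_le_coe] at h
  have h2 : ((∑' m, ‖g m‖₊ ^ 2 : ℝ≥0) : ℝ) ≤ ((a.toNNReal : ℝ≥0) : ℝ) := h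
  rw [Real.coe_toNNReal a ha, NNReal.coe_tsum] at h2
  simpa [hcoe] using h2

end Aux

section Dop
variable {H E : Type*}
    [NormedAddCommGroup H] [InnerProductSpace ℂ H] [CompleteSpace H]
    [NormedAddCommGroup E] [InnerProductSpace ℂ E] [CompleteSpace E]

/-- The coefficient operators `D m = Σ_{j≤m} X_{m-j} T^j − L T^{m+1}`. -/
def Dop (T : H →L[ℂ] H) (Xf : ℕ → H →L[ℂ] E) (L : H →L[ℂ] E) (m : ℕ) : H →L[ℂ] E :=
  (∑ j ∈ Finset.range (m + 1), (Xf (m - j)).comp (T ^ j)) - L.comp (T ^ (m + 1))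

lemma Dop_apply (T : H →L[ℂ] H) (Xf : ℕ → H →L[ℂ] E) (L : H →L[ℂ] E) (m : ℕ) (h : H) :
    Dop T Xf L m h =
      (∑ j ∈ Finset.range (m + 1), Xf (m - j) ((T ^ j) h)) - L ((T ^ (m + 1)) h) := by
  simp [Dop]

lemma Dop_succ (T : H →L[ℂ] H) (Xf : ℕ → H →L[ℂ] E) (L : H →L[ℂ] E) (m : ℕ) (h : H) :
    Dop T Xf L (m + 1) h = Xf (m + 1) h + Dop T Xf L m (T h) := by
  rw [Dop_apply, Dop_apply, Finset.sum_range_succ']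
  have hpow : ∀ j : ℕ, (T ^ (j + 1)) h = (T ^ j) (T h) := fun j => by
    rw [pow_succ]; rfl
  simp only [hpow, Nat.succ_sub_succ, Nat.sub_zero, pow_zero, ContinuousLinearMap.one_apply]
  abel

end Dop
/-- Let `(H, T)` be a Hilbert module over the disc algebra, `X : H → H²(E)` a bounded
operator with coefficient operators `Xₙ`, `c > 0` and `L ∈ B(H,E)`. There is a bounded
`Λ : H → H²(E)` with `X = S_E*Λ − ΛT`, `P_E Λ = −L` and `‖Λh‖² ≤ ‖Lh‖² + c‖h‖²` for all
`h`, if and only if `Σ_{n=1}^∞ ‖(Σ_{j=0}^{n-1} X_{n-1-j} T^j − L Tⁿ) h‖² ≤ c‖h‖²`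
for all `h`. -/
theorem innerchar {H E : Type*}
    [NormedAddCommGroup H] [InnerProductSpace ℂ H] [CompleteSpace H]
    [NormedAddCommGroup E] [InnerProductSpace ℂ E] [CompleteSpace E]
    (T : H →L[ℂ] H)
    (hT : ∃ C > (0 : ℝ), ∀ φ : Polynomial ℂ, ‖Polynomial.aeval T φ‖ ≤ C * discSupNorm φ)
    (X : H →L[ℂ] HardySpace E) (Xf : ℕ → H →L[ℂ] E)
    (hX : ∀ (h : H) (n : ℕ), (X h) n = Xf n h)
    (c : ℝ) (hc : 0 < c) (L : H →L[ℂ] E)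
    (SE : HardySpace E →L[ℂ] HardySpace E)
    (hSE : ∀ (f : HardySpace E) (n : ℕ), (SE f) n = if n = 0 then 0 else f (n - 1)) :
    (∃ Λ : H →L[ℂ] HardySpace E,
        X = (ContinuousLinearMap.adjoint SE).comp Λ - Λ.comp T ∧
        (∀ h : H, (Λ h) 0 = -(L h)) ∧
        ∀ h : H, ‖Λ h‖ ^ 2 ≤ ‖L h‖ ^ 2 + c * ‖h‖ ^ 2) ↔
      ∀ h : H,
        ∑' m : ℕ,
            (‖(∑ j ∈ Finset.range (m + 1), Xf (m - j) ((T ^ j) h)) - L ((T ^ (m + 1)) h)‖₊ :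
              ℝ≥0∞) ^ 2 ≤
          ENNReal.ofReal (c * ‖h‖ ^ 2) := by
  classical
  constructor
  · rintro ⟨Λ, hEq, hΛ0, hbound⟩ h
    have key : ∀ (h : H) (n : ℕ), (Λ h) (n + 1) = Xf n h + (Λ (T h)) n := by
      intro h n
      have h1 : X h = ContinuousLinearMap.adjoint SE (Λ h) - Λ (T h) := by
        rw [hEq]; rfl
      have h2 : (X h) n = (ContinuousLinearMap.adjoint SE (Λ h)) n - (Λ (T h)) n := by
        rw [h1]; simp
      rw [adjoint_shift_apply SE hSE, hX] at h2
      exact sub_eq_iff_eq_add.mp h2.symm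
    have coord : ∀ (m : ℕ) (h : H), (Λ h) (m + 1) = Dop T Xf L m h := by
      intro m
      induction m with
      | zero =>
        intro h
        rw [key, Dop_apply, hΛ0]
        simp [sub_eq_add_neg]
      | succ m ih =>
        intro h
        rw [key, Dop_succ, ih]
    have hsum := hardy_summable_sq (Λ h)
    have hsum' : Summable (fun m => ‖Dop T Xf L m h‖ ^ 2) := by
      have h1 := (summable_nat_add_iff 1).2 hsum
      simpa [coord] using h1
    have hts : ∑' m, ‖Dop T Xf L m h‖ ^ 2 ≤ c * ‖h‖ ^ 2 := by
      have h3 := hardy_norm_sq_split (Λ h)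
      rw [hΛ0, norm_neg] at h3
      have h5 : ∑' m, ‖(Λ h) (m + 1)‖ ^ 2 = ∑' m, ‖Dop T Xf L m h‖ ^ 2 :=
        tsum_congr fun m => by rw [coord]
      have h4 := hbound h
      rw [h3, h5] at h4
      linarith
    have := toENN (fun m => Dop T Xf L m h) (c * ‖h‖ ^ 2) hsum' hts
    simpa [Dop_apply] using this
  · intro hyp
    have hb : ∀ h : H,
        Summable (fun m => ‖Dop T Xf L m h‖ ^ 2) ∧
          ∑' m, ‖Dop T Xf L m h‖ ^ 2 ≤ c * ‖h‖ ^ 2 := fun h =>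
      fromENN (fun m => Dop T Xf L m h) (c * ‖h‖ ^ 2)
        (by positivity) (by simpa [Dop_apply] using hyp h)
    set A : ℕ → H →L[ℂ] E := fun n => Nat.casesOn n (-L) (fun m => Dop T Xf L m) with hA
    have hA0 : ∀ h : H, A 0 h = -(L h) := fun h => rfl
    have hAs : ∀ (m : ℕ) (h : H), A (m + 1) h = Dop T Xf L m h := fun m h => rfl
    have hmem : ∀ h : H, Memℓp (fun n => A n h) (2 : ℝ≥0∞) := by
      intro h
      apply memℓp_gen
      have h2 : ((2 : ℝ≥0∞).toReal) = (2 : ℝ) := by norm_num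
      rw [h2]
      have hs : Summable (fun n => ‖A n h‖ ^ 2) := by
        refine (summable_nat_add_iff 1).1 ?_
        simpa [hAs] using (hb h).1
      simpa [Real.rpow_two] using hs
    set Λlin : H →ₗ[ℂ] HardySpace E :=
      { toFun := fun h => ⟨fun n => A n h, hmem h⟩
        map_add' := fun x y => by
          apply lp.ext; funext n
          simp [lp.coeFn_add]
          rfl
        map_smul' := fun a x => by
          apply lp.ext; funext n
          simp [lp.coeFn_smul] } with hΛlin
    have hΛcoe : ∀ (h : H) (n : ℕ), (Λlin h : ∀ _ : ℕ, E) n = A n h := fun h n => rfl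
    have hns : ∀ h : H, ‖Λlin h‖ ^ 2 = ‖L h‖ ^ 2 + ∑' m, ‖Dop T Xf L m h‖ ^ 2 := by
      intro h
      have e0 : ‖(Λlin h : ∀ _ : ℕ, E) 0‖ = ‖L h‖ := by rw [hΛcoe h 0, hA0, norm_neg]
      have e1 : ∑' m, ‖(Λlin h : ∀ _ : ℕ, E) (m + 1)‖ ^ 2 = ∑' m, ‖Dop T Xf L m h‖ ^ 2 :=
        tsum_congr fun m => by rw [hΛcoe h (m + 1), hAs]
      rw [hardy_norm_sq_split (Λlin h), e0, e1]
    have hcont : ∀ h : H, ‖Λlin h‖ ≤ Real.sqrt (‖L‖ ^ 2 + c) * ‖h‖ := by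
      intro h
      have h1 : ‖Λlin h‖ ^ 2 ≤ (‖L‖ ^ 2 + c) * ‖h‖ ^ 2 := by
        rw [hns h]
        have h2 := (hb h).2
        have hL := L.le_opNorm h
        nlinarith [norm_nonneg (L h), norm_nonneg h, norm_nonneg L]
      have h2 := Real.sqrt_le_sqrt h1
      rw [Real.sqrt_sq (norm_nonneg _), Real.sqrt_mul (by positivity) (‖h‖ ^ 2),
        Real.sqrt_sq (norm_nonneg h)] at h2
      exact h2
    refine ⟨Λlin.mkContinuous (Real.sqrt (‖L‖ ^ 2 + c)) hcont, ?_, ?_, ?_⟩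
    · apply ContinuousLinearMap.ext; intro h
      apply lp.ext; funext n
      have hc1 : ((((ContinuousLinearMap.adjoint SE).comp
            (Λlin.mkContinuous (Real.sqrt (‖L‖ ^ 2 + c)) hcont) -
            (Λlin.mkContinuous (Real.sqrt (‖L‖ ^ 2 + c)) hcont).comp T) h :
            HardySpace E) : ∀ _ : ℕ, E) n
          = (ContinuousLinearMap.adjoint SE (Λlin h)) n - (Λlin (T h) : ∀ _ : ℕ, E) n := by
        simp [LinearMap.mkContinuous_apply]
      rw [hc1, adjoint_shift_apply SE hSE, hΛcoe, hΛcoe, hX]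
      rcases n with _ | m
      · rw [hAs, hA0, Dop_apply]
        simp [sub_eq_add_neg]
      · rw [hAs, hAs, Dop_succ]
        abel
    · intro h
      have : (Λlin.mkContinuous (Real.sqrt (‖L‖ ^ 2 + c)) hcont h : ∀ _ : ℕ, E) 0 = A 0 h := rfl
      rw [this, hA0]
    · intro h
      have heq : ‖Λlin.mkContinuous (Real.sqrt (‖L‖ ^ 2 + c)) hcont h‖ = ‖Λlin h‖ := rfl
      rw [heq, hns h]
      have := (hb h).2
      linarith
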